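/- Let a ≥ b ≥ c and x ≥ y ≥ z be real numbers with a+b+c = x+y+z = 0, a^2+b^2+c^2 = x^2+y^2+z^2, and e^a+e^b+e^c = e^x+e^y+e^z. Then a = x, b = y, and c = z. -/

import Mathlib

open Set

private lemma mid_le {D : Set ℝ} {f : ℝ → ℝ} (hf : ConvexOn ℝ D f) {u v w : ℝ}
    (hu : u ∈ D) (hw : w ∈ D) (h1 : u < v) (h2 : v < w) :
    (w - u) * f v ≤ (w - v) * f u + (v - u) * f w := by
  have huw : (0:ℝ) < w - u := by linarith
  have key := hf.2 hu hw (show (0:ℝ) ≤ (w - v)/(w - u) from div_nonneg (by linarith) huw.le)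
    (show (0:ℝ) ≤ (v - u)/(w - u) from div_nonneg (by linarith) huw.le)
    (by field_simp; ring)
  simp only [smul_eq_mul] at key
  have hv : (w - v)/(w - u) * u + (v - u)/(w - u) * w = v := by field_simp; ring
  rw [hv] at key
  have key2 := mul_le_mul_of_nonneg_left key huw.le
  have he : (w - u) * ((w - v)/(w - u) * f u + (v - u)/(w - u) * f w)
      = (w - v) * f u + (v - u) * f w := by field_simp
  rw [he] at key2
  exact key2

private lemma mid_lt {D : Set ℝ} {f : ℝ → ℝ} (hf : StrictConvexOn ℝ D f) {u v w : ℝ}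
    (hu : u ∈ D) (hw : w ∈ D) (h1 : u < v) (h2 : v < w) :
    (w - u) * f v < (w - v) * f u + (v - u) * f w := by
  have huw : (0:ℝ) < w - u := by linarith
  have key := hf.2 hu hw (show u ≠ w by intro h; rw [h] at h1; linarith)
    (show (0:ℝ) < (w - v)/(w - u) from div_pos (by linarith) huw)
    (show (0:ℝ) < (v - u)/(w - u) from div_pos (by linarith) huw)
    (by field_simp; ring)
  simp only [smul_eq_mul] at key
  have hv : (w - v)/(w - u) * u + (v - u)/(w - u) * w = v := by field_simp; ring
  rw [hv] at key
  have key2 := mul_lt_mul_of_pos_left key huw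
  have he : (w - u) * ((w - v)/(w - u) * f u + (v - u)/(w - u) * f w)
      = (w - v) * f u + (v - u) * f w := by field_simp
  rw [he] at key2
  exact key2

private lemma mid_ge {D : Set ℝ} {f : ℝ → ℝ} (hf : ConcaveOn ℝ D f) {u v w : ℝ}
    (hu : u ∈ D) (hw : w ∈ D) (h1 : u < v) (h2 : v < w) :
    (w - v) * f u + (v - u) * f w ≤ (w - u) * f v := by
  have huw : (0:ℝ) < w - u := by linarith
  have key := hf.2 hu hw (show (0:ℝ) ≤ (w - v)/(w - u) from div_nonneg (by linarith) huw.le)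
    (show (0:ℝ) ≤ (v - u)/(w - u) from div_nonneg (by linarith) huw.le)
    (by field_simp; ring)
  simp only [smul_eq_mul] at key
  have hv : (w - v)/(w - u) * u + (v - u)/(w - u) * w = v := by field_simp; ring
  rw [hv] at key
  have key2 := mul_le_mul_of_nonneg_left key huw.le
  have he : (w - u) * ((w - v)/(w - u) * f u + (v - u)/(w - u) * f w)
      = (w - v) * f u + (v - u) * f w := by field_simp
  rw [he] at key2
  exact key2

private lemma mid_gt {D : Set ℝ} {f : ℝ → ℝ} (hf : StrictConcaveOn ℝ D f) {u v w : ℝ}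
    (hu : u ∈ D) (hw : w ∈ D) (h1 : u < v) (h2 : v < w) :
    (w - v) * f u + (v - u) * f w < (w - u) * f v := by
  have huw : (0:ℝ) < w - u := by linarith
  have key := hf.2 hu hw (show u ≠ w by intro h; rw [h] at h1; linarith)
    (show (0:ℝ) < (w - v)/(w - u) from div_pos (by linarith) huw)
    (show (0:ℝ) < (v - u)/(w - u) from div_pos (by linarith) huw)
    (by field_simp; ring)
  simp only [smul_eq_mul] at key
  have hv : (w - v)/(w - u) * u + (v - u)/(w - u) * w = v := by field_simp; ring
  rw [hv] at key
  have key2 := mul_lt_mul_of_pos_left key huw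
  have he : (w - u) * ((w - v)/(w - u) * f u + (v - u)/(w - u) * f w)
      = (w - v) * f u + (v - u) * f w := by field_simp
  rw [he] at key2
  exact key2

private lemma interp (z b x : ℝ) (hzb : z < b) (hbx : b < x) :
    ∃ α β γ : ℝ, Real.exp z = α*z^2 + β*z + γ ∧ Real.exp b = α*b^2 + β*b + γ ∧
      Real.exp x = α*x^2 + β*x + γ := by
  have h1 : b - z ≠ 0 := by linarith
  have h2 : x - b ≠ 0 := by linarith
  have h3 : x - z ≠ 0 := by linarith
  set d1 := (Real.exp b - Real.exp z)/(b - z) with hd1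
  set d2 := ((Real.exp x - Real.exp b)/(x - b) - d1)/(x - z) with hd2
  refine ⟨d2, d1 - (z + b)*d2, Real.exp z - z*d1 + z*b*d2, by ring, ?_, ?_⟩
  · rw [hd1]; field_simp; ring
  · rw [hd2, hd1]; field_simp; ring

private lemma quad_sign (α β γ z b x : ℝ) (hzb : z < b) (hbx : b < x)
    (hz0 : Real.exp z = α*z^2 + β*z + γ)
    (hb0 : Real.exp b = α*b^2 + β*b + γ)
    (hx0 : Real.exp x = α*x^2 + β*x + γ) :
    (∀ t, x < t → α*t^2 + β*t + γ < Real.exp t) ∧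
    (∀ t, z < t → t ≤ b → α*t^2 + β*t + γ ≤ Real.exp t) ∧
    (∀ t, b < t → t ≤ x → Real.exp t ≤ α*t^2 + β*t + γ) := by
  set h : ℝ → ℝ := fun t => Real.exp t - (α*t^2 + β*t + γ) with hh
  have hz : h z = 0 := by simp only [hh]; linarith
  have hb : h b = 0 := by simp only [hh]; linarith
  have hx : h x = 0 := by simp only [hh]; linarith
  have hgoal : ((∀ t, x < t → 0 < h t) ∧ (∀ t, z < t → t ≤ b → 0 ≤ h t) ∧
      (∀ t, b < t → t ≤ x → h t ≤ 0)) →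
      ((∀ t, x < t → α*t^2 + β*t + γ < Real.exp t) ∧
      (∀ t, z < t → t ≤ b → α*t^2 + β*t + γ ≤ Real.exp t) ∧
      (∀ t, b < t → t ≤ x → Real.exp t ≤ α*t^2 + β*t + γ)) := by
    rintro ⟨p1, p2, p3⟩
    exact ⟨fun t ht => by have := p1 t ht; simp only [hh] at this; linarith,
      fun t ht1 ht2 => by have := p2 t ht1 ht2; simp only [hh] at this; linarith,
      fun t ht1 ht2 => by have := p3 t ht1 ht2; simp only [hh] at this; linarith⟩
  apply hgoal
  have hcont : Continuous h := by
    apply Real.continuous_exp.sub; continuity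
  have hq : ∀ t : ℝ, HasDerivAt (fun s => α*s^2 + β*s + γ) (2*α*t + β) t := by
    intro t
    have h1 := (((hasDerivAt_pow 2 t).const_mul α).add
      ((hasDerivAt_id t).const_mul β)).add_const γ
    refine h1.congr_deriv ?_
    push_cast; ring
  have hderiv : deriv h = fun t => Real.exp t - (2*α*t + β) := by
    funext t
    exact ((Real.hasDerivAt_exp t).sub (hq t)).deriv
  have hd2 : ∀ t : ℝ, deriv^[2] h t = Real.exp t - 2*α := by
    intro t
    have h1 : ∀ s : ℝ, HasDerivAt (fun u : ℝ => Real.exp u - (2*α*u + β))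
        (Real.exp s - 2*α) s := by
      intro s
      have h2 := (Real.hasDerivAt_exp s).sub
        (((hasDerivAt_id s).const_mul (2*α)).add_const β)
      refine h2.congr_deriv ?_
      simp [mul_comm]
    show deriv (deriv h) t = _
    rw [hderiv]
    exact (h1 t).deriv
  rcases le_or_gt α 0 with hα | hα
  · exfalso
    have CV : StrictConvexOn ℝ univ h := strictConvexOn_univ_of_deriv2_pos hcont
      (fun t => by rw [hd2 t]; linarith [Real.exp_pos t])
    have := mid_lt CV (mem_univ z) (mem_univ x) hzb hbx
    rw [hz, hb, hx] at this
    linarith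
  · set s := Real.log (2*α) with hsdef
    have hs : Real.exp s = 2*α := Real.exp_log (by linarith)
    have CV : StrictConvexOn ℝ (Ici s) h :=
      strictConvexOn_of_deriv2_pos (convex_Ici s) hcont.continuousOn
        (fun t ht => by
          rw [hd2 t]
          rw [interior_Ici, mem_Ioi] at ht
          have := Real.exp_lt_exp.mpr ht
          linarith)
    have CC : StrictConcaveOn ℝ (Iic s) h :=
      strictConcaveOn_of_deriv2_neg (convex_Iic s) hcont.continuousOn
        (fun t ht => by
          rw [hd2 t]
          rw [interior_Iic, mem_Iio] at ht
          have := Real.exp_lt_exp.mpr ht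
          linarith)
    have hxs : s < x := by
      by_contra hcon
      push_neg at hcon
      have := mid_gt CC (mem_Iic.mpr (by linarith)) (mem_Iic.mpr hcon) hzb hbx
      rw [hz, hb, hx] at this
      linarith
    have conv_nonneg : ∀ t, s ≤ t → t < b → 0 ≤ h t := by
      intro t hst htb
      have key := mid_le CV.convexOn (mem_Ici.mpr hst) (mem_Ici.mpr hxs.le) htb
        (by linarith : b < x)
      rw [hb, hx] at key
      nlinarith
    have conc_nonpos : ∀ t, b < t → t ≤ s → h t ≤ 0 := by
      intro t hbt hts
      have key := mid_ge CC.concaveOn (mem_Iic.mpr (by linarith)) (mem_Iic.mpr hts) hzb hbt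
      rw [hz, hb] at key
      nlinarith
    obtain ⟨w0, hsw0, hw0x, hbw0, hw0eq, hw0le⟩ :
        ∃ w0, s ≤ w0 ∧ w0 < x ∧ b ≤ w0 ∧ (w0 = b ∨ w0 = s) ∧ h w0 ≤ 0 := by
      rcases le_or_gt b s with hbs | hsb
      · rcases eq_or_lt_of_le hbs with heq | hlt
        · exact ⟨s, le_refl s, hxs, hbs, Or.inr rfl, le_of_eq (heq ▸ hb)⟩
        · exact ⟨s, le_refl s, hxs, hbs, Or.inr rfl, conc_nonpos s hlt (le_refl s)⟩
      · exact ⟨b, hsb.le, hbx, le_refl b, Or.inl rfl, le_of_eq hb⟩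
    refine ⟨?_, ?_, ?_⟩
    · intro t hxt
      have key := mid_lt CV (mem_Ici.mpr hsw0) (mem_Ici.mpr (by linarith : s ≤ t))
        hw0x hxt
      rw [hx] at key
      nlinarith [mul_nonneg (by linarith : (0:ℝ) ≤ t - x) (neg_nonneg.mpr hw0le)]
    · intro t hzt htb
      rcases eq_or_lt_of_le htb with heq | hlt
      · simp [heq, hb]
      · rcases le_or_gt t s with hts | hst
        · rcases le_or_gt b s with hbs | hsb
          · have key := mid_ge CC.concaveOn (mem_Iic.mpr (by linarith)) (mem_Iic.mpr hbs)
              hzt hlt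
            rw [hz, hb] at key
            nlinarith
          · have hhs : 0 ≤ h s := conv_nonneg s (le_refl s) hsb
            rcases eq_or_lt_of_le hts with heq2 | hlt2
            · rw [heq2]; exact hhs
            · have key := mid_ge CC.concaveOn (mem_Iic.mpr (by linarith))
                (mem_Iic.mpr (le_refl s)) hzt hlt2
              rw [hz] at key
              nlinarith
        · exact conv_nonneg t hst.le hlt
    · intro t hbt htx
      rcases eq_or_lt_of_le htx with heq | hlt
      · exact le_of_eq (heq ▸ hx)
      · rcases le_or_gt t s with hts | hst
        · exact conc_nonpos t hbt hts
        · have hw0t : w0 < t := by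
            rcases hw0eq with h' | h' <;> rw [h'] <;> linarith
          have key := mid_le CV.convexOn (mem_Ici.mpr hsw0) (mem_Ici.mpr hxs.le)
            hw0t hlt
          rw [hx] at key
          have h1 : (x - t) * h w0 ≤ 0 :=
            mul_nonpos_iff.mpr (Or.inl ⟨by linarith, hw0le⟩)
          have h2 : (x - w0) * h t ≤ 0 := by linarith
          by_contra hc
          push_neg at hc
          have := mul_pos (show (0:ℝ) < x - w0 by linarith) hc
          linarith

private lemma key (a b c x y z : ℝ)
    (hab : b ≤ a) (hbc : c ≤ b) (hxy : y ≤ x) (hyz : z ≤ y)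
    (hs1 : a + b + c = 0) (hs2 : x + y + z = 0)
    (hsq : a^2 + b^2 + c^2 = x^2 + y^2 + z^2)
    (hexp : Real.exp a + Real.exp b + Real.exp c = Real.exp x + Real.exp y + Real.exp z)
    (hd : x*y*z < a*b*c) : False := by
  have he2 : a*b + b*c + c*a = x*y + y*z + z*x := by
    linear_combination ((a+b+c)*hs1 - (x+y+z)*hs2 - hsq)/2
  have Fc : (c-x)*((c-y)*(c-z)) = a*b*c - x*y*z := by
    linear_combination c^2*hs1 - c^2*hs2 - c*he2
  have Gx : (x-a)*((x-b)*(x-c)) = x*y*z - a*b*c := by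
    linear_combination x^2*hs2 - x^2*hs1 + x*he2
  have Gy : (y-a)*((y-b)*(y-c)) = x*y*z - a*b*c := by
    linear_combination y^2*hs2 - y^2*hs1 + y*he2
  have hax : x < a := by
    by_contra hcon
    push_neg at hcon
    nlinarith [Gx, mul_nonneg (mul_nonneg (by linarith : (0:ℝ) ≤ x - a)
      (by linarith : (0:ℝ) ≤ x - b)) (by linarith : (0:ℝ) ≤ x - c)]
  have hzc : z < c := by
    by_contra hcon
    push_neg at hcon
    have h1 : 0 ≤ (c-x)*(c-y) := by
      have := mul_nonneg (by linarith : (0:ℝ) ≤ x - c) (by linarith : (0:ℝ) ≤ y - c)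
      nlinarith [this]
    nlinarith [Fc, mul_nonneg h1 (by linarith : (0:ℝ) ≤ z - c)]
  have hby : b < y := by
    by_contra hcon
    push_neg at hcon
    have hP : 0 < (y-b)*(y-c) := by
      nlinarith [Gy, hd, (by linarith : y - a < 0)]
    have hcy : y < c := by nlinarith [hP]
    linarith
  have hzb : z < b := by linarith
  have hbx : b < x := by linarith
  obtain ⟨α, β, γ, hz0, hb0, hx0⟩ := interp z b x hzb hbx
  obtain ⟨H1, H2, H3⟩ := quad_sign α β γ z b x hzb hbx hz0 hb0 hx0
  have ha' : α*a^2 + β*a + γ < Real.exp a := H1 a (by linarith)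
  have hc' : α*c^2 + β*c + γ ≤ Real.exp c := H2 c hzc hbc
  have hy' : Real.exp y ≤ α*y^2 + β*y + γ := H3 y hby hxy
  have e1 : α*(a^2+b^2+c^2) = α*(x^2+y^2+z^2) := by rw [hsq]
  have e2 : β*(a+b+c) = β*(x+y+z) := by rw [hs1, hs2]
  linarith [ha', hc', hy', hz0, hb0, hx0, hexp, e1, e2]

theorem stmt_6 (a b c x y z : ℝ)
    (hab : a ≥ b) (hbc : b ≥ c) (hxy : x ≥ y) (hyz : y ≥ z)
    (hs1 : a + b + c = 0) (hs2 : x + y + z = 0)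
    (hsq : a^2 + b^2 + c^2 = x^2 + y^2 + z^2)
    (hexp : Real.exp a + Real.exp b + Real.exp c = Real.exp x + Real.exp y + Real.exp z) :
    a = x ∧ b = y ∧ c = z := by
  rcases lt_trichotomy (x*y*z) (a*b*c) with h | h | h
  · exact (key a b c x y z hab hbc hxy hyz hs1 hs2 hsq hexp h).elim
  · have he2 : a*b + b*c + c*a = x*y + y*z + z*x := by
      linear_combination ((a+b+c)*hs1 - (x+y+z)*hs2 - hsq)/2
    have Fa : (a-x)*((a-y)*(a-z)) = 0 := by
      linear_combination a^2*hs1 - a^2*hs2 - a*he2 - h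
    have Fc : (c-x)*((c-y)*(c-z)) = 0 := by
      linear_combination c^2*hs1 - c^2*hs2 - c*he2 - h
    have Gx : (x-a)*((x-b)*(x-c)) = 0 := by
      linear_combination x^2*hs2 - x^2*hs1 + x*he2 + h
    have Gz : (z-a)*((z-b)*(z-c)) = 0 := by
      linear_combination z^2*hs2 - z^2*hs1 + z*he2 + h
    have hax : a = x := by
      have h1 : a ≤ x := by
        rcases mul_eq_zero.mp Fa with h' | h'
        · have := sub_eq_zero.mp h'; linarith
        · rcases mul_eq_zero.mp h' with h'' | h''
          · have := sub_eq_zero.mp h''; linarith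
          · have := sub_eq_zero.mp h''; linarith
      have h2 : x ≤ a := by
        rcases mul_eq_zero.mp Gx with h' | h'
        · have := sub_eq_zero.mp h'; linarith
        · rcases mul_eq_zero.mp h' with h'' | h''
          · have := sub_eq_zero.mp h''; linarith
          · have := sub_eq_zero.mp h''; linarith
      linarith
    have hcz : c = z := by
      have h1 : z ≤ c := by
        rcases mul_eq_zero.mp Fc with h' | h'
        · have := sub_eq_zero.mp h'; linarith
        · rcases mul_eq_zero.mp h' with h'' | h''
          · have := sub_eq_zero.mp h''; linarith
          · have := sub_eq_zero.mp h''; linarith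
      have h2 : c ≤ z := by
        rcases mul_eq_zero.mp Gz with h' | h'
        · have := sub_eq_zero.mp h'; linarith
        · rcases mul_eq_zero.mp h' with h'' | h''
          · have := sub_eq_zero.mp h''; linarith
          · have := sub_eq_zero.mp h''; linarith
      linarith
    exact ⟨hax, by linarith, hcz⟩
  · exact (key x y z a b c hxy hyz hab hbc hs2 hs1 hsq.symm hexp.symm h).elim
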